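/- Let L ⊆ A be a bracket-closed subspace, m ∈ ℕ, and let w_1, …, w_m ∈ L be homogeneous elements such that w_i² = 0 whenever p_{w_i w_i}² = 1 (1 ≤ i ≤ m). If for every r and all pairwise distinct indices i_1, …, i_r ∈ {1, …, m} the product w_{i_1} w_{i_2} ⋯ w_{i_r} lies in L + F·1, then for all exponents a_1, …, a_m ∈ ℕ₀ the product w_1^{a_1} w_2^{a_2} ⋯ w_m^{a_m} lies in L + F·1. -/

import Mathlib

set_option linter.unusedSectionVars false
set_option linter.unnecessarySimpa false
set_option maxHeartbeats 1000000

section Aux1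
variable {F : Type*} [Field F]
  {G : Type*} [AddCommGroup G] [DecidableEq G]
  {A : Type*} [Ring A] [Algebra F A]
  {𝒜 : G → Submodule F A} [GradedAlgebra 𝒜]
  {χ : G → G → Fˣ}
  {L : Submodule F A}

lemma aux_proj (hL1 : L = Submodule.span F {a : A | a ∈ L ∧ ∃ g : G, a ∈ 𝒜 g})
    (k : G) {x : A} (hx : x ∈ L) : (DirectSum.decompose 𝒜 x k : A) ∈ L := by
  rw [hL1] at hx
  induction hx using Submodule.span_induction with
  | mem a ha =>
    obtain ⟨haL, g', hg'⟩ := ha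
    by_cases hgk : g' = k
    · subst hgk; rwa [DirectSum.decompose_of_mem_same 𝒜 hg']
    · rw [DirectSum.decompose_of_mem_ne 𝒜 hg' hgk]; exact L.zero_mem
  | zero => simp only [DirectSum.decompose_zero]; simpa using L.zero_mem
  | add a b _ _ iha ihb =>
    rw [DirectSum.decompose_add]
    exact (by simpa using L.add_mem iha ihb : _)
  | smul r a _ iha =>
    rw [DirectSum.decompose_smul]
    exact (by simpa using L.smul_mem r iha : _)

/-- A homogeneous element of `L ⊔ F·1` of nonzero degree lies in `L`. -/
lemma aux_hom_ne (hL1 : L = Submodule.span F {a : A | a ∈ L ∧ ∃ g : G, a ∈ 𝒜 g})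
    {k : G} (hk : k ≠ 0) {x : A} (hx : x ∈ L ⊔ Submodule.span F {(1:A)})
    (hxk : x ∈ 𝒜 k) : x ∈ L := by
  rcases Submodule.mem_sup.mp hx with ⟨u, hu, s, hs, rfl⟩
  rcases Submodule.mem_span_singleton.mp hs with ⟨α, rfl⟩
  have h1 : ((1:A) : A) ∈ 𝒜 0 := SetLike.one_mem_graded 𝒜
  have hd : (DirectSum.decompose 𝒜 (u + α • (1:A)) k : A) = u + α • 1 :=
    DirectSum.decompose_of_mem_same 𝒜 hxk
  rw [DirectSum.decompose_add, DirectSum.decompose_smul] at hd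
  have h1k : (DirectSum.decompose 𝒜 (1:A) k : A) = 0 :=
    DirectSum.decompose_of_mem_ne 𝒜 h1 (Ne.symm hk)
  have : (u + α • (1:A)) = (DirectSum.decompose 𝒜 u k : A) + α • (DirectSum.decompose 𝒜 (1:A) k : A) := by
    rw [← hd]; rfl
  rw [h1k, smul_zero, add_zero] at this
  rw [this]
  exact aux_proj hL1 k hu

/-- Decomposition of a homogeneous element of `L ⊔ F·1`. -/
lemma aux_decomp (hL1 : L = Submodule.span F {a : A | a ∈ L ∧ ∃ g : G, a ∈ 𝒜 g})
    {k : G} {x : A} (hx : x ∈ L ⊔ Submodule.span F {(1:A)})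
    (hxk : x ∈ 𝒜 k) : ∃ (u : A) (α : F), u ∈ L ∧ u ∈ 𝒜 k ∧ x = u + α • (1:A) := by
  by_cases hk : k = 0
  · subst hk
    rcases Submodule.mem_sup.mp hx with ⟨u, hu, s, hs, rfl⟩
    rcases Submodule.mem_span_singleton.mp hs with ⟨α, rfl⟩
    refine ⟨u, α, hu, ?_, rfl⟩
    have h1 : ((1:A) : A) ∈ 𝒜 0 := SetLike.one_mem_graded 𝒜
    have : u = (u + α • (1:A)) - α • (1:A) := by module
    rw [this]
    exact Submodule.sub_mem _ hxk (Submodule.smul_mem _ _ h1)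
  · exact ⟨x, 0, aux_hom_ne hL1 hk hx hxk, hxk, by simp⟩

/-- swap: if `U*V ∈ L ⊔ F·1` then `V*U ∈ L ⊔ F·1`, for homogeneous `U V ∈ L`. -/
lemma aux_swap (hL2 : ∀ (g h : G), ∀ u ∈ 𝒜 g, ∀ v ∈ 𝒜 h, u ∈ L → v ∈ L →
      v * u - (χ h g : F) • (u * v) ∈ L)
    {gU gV : G} {U V : A} (hU : U ∈ 𝒜 gU) (hV : V ∈ 𝒜 gV) (hUL : U ∈ L) (hVL : V ∈ L)
    (h : U * V ∈ L ⊔ Submodule.span F {(1:A)}) : V * U ∈ L ⊔ Submodule.span F {(1:A)} := by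
  have hb : V * U - (χ gV gU : F) • (U * V) ∈ L := hL2 gU gV U hU V hV hUL hVL
  have : V * U = (V * U - (χ gV gU : F) • (U * V)) + (χ gV gU : F) • (U * V) := by module
  rw [this]
  exact Submodule.add_mem _ (Submodule.mem_sup_left hb) (Submodule.smul_mem _ _ h)

/-- merge: if the symmetrized bicharacter value is ≠ 1, the product of two
homogeneous elements of `L` is in `L`. -/
lemma aux_merge (hL2 : ∀ (g h : G), ∀ u ∈ 𝒜 g, ∀ v ∈ 𝒜 h, u ∈ L → v ∈ L →
      v * u - (χ h g : F) • (u * v) ∈ L)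
    {gU gV : G} {U V : A} (hU : U ∈ 𝒜 gU) (hV : V ∈ 𝒜 gV) (hUL : U ∈ L) (hVL : V ∈ L)
    (hne : (χ gU gV : F) * (χ gV gU : F) ≠ 1) : U * V ∈ L := by
  have l1 : V * U - (χ gV gU : F) • (U * V) ∈ L := hL2 gU gV U hU V hV hUL hVL
  have l2 : U * V - (χ gU gV : F) • (V * U) ∈ L := hL2 gV gU V hV U hU hVL hUL
  have key : (1 - (χ gU gV : F) * (χ gV gU : F)) • (U * V) ∈ L := by
    have := Submodule.add_mem _ l2 (Submodule.smul_mem _ ((χ gU gV : F)) l1)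
    have e : (U * V - (χ gU gV : F) • (V * U)) + (χ gU gV : F) • (V * U - (χ gV gU : F) • (U * V))
        = (1 - (χ gU gV : F) * (χ gV gU : F)) • (U * V) := by
      module
    rwa [e] at this
  have hne0 : (1 - (χ gU gV : F) * (χ gV gU : F)) ≠ 0 := sub_ne_zero.mpr (Ne.symm hne)
  have := Submodule.smul_mem _ ((1 - (χ gU gV : F) * (χ gV gU : F))⁻¹) key
  rwa [smul_smul, inv_mul_cancel₀ hne0, one_smul] at this

end Aux1

section Aux2
variable {F : Type*} [Field F]
  {G : Type*} [AddCommGroup G] [DecidableEq G]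
  {A : Type*} [Ring A] [Algebra F A]
  {𝒜 : G → Submodule F A} [GradedAlgebra 𝒜]
  {χ : G → G → Fˣ}
  {L : Submodule F A}

lemma aux_bichar_zl (hχ1 : ∀ g h k : G, χ (g + h) k = χ g k * χ h k) (y : G) : χ 0 y = 1 := by
  have := hχ1 0 0 y
  rw [add_zero] at this
  exact mul_right_cancel (a := χ 0 y) (by rw [one_mul, ← this])

lemma aux_bichar_zr (hχ2 : ∀ g h k : G, χ g (h + k) = χ g h * χ g k) (y : G) : χ y 0 = 1 := by
  have := hχ2 y 0 0
  rw [add_zero] at this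
  exact mul_right_cancel (a := χ y 0) (by rw [one_mul, ← this])

lemma aux_bichar_nl (hχ1 : ∀ g h k : G, χ (g + h) k = χ g k * χ h k) (x y : G) (n : ℕ) :
    χ (n • x) y = χ x y ^ n := by
  induction n with
  | zero => simpa using aux_bichar_zl hχ1 y
  | succ k ih => rw [succ_nsmul, hχ1, ih, pow_succ]

lemma aux_bichar_nr (hχ2 : ∀ g h k : G, χ g (h + k) = χ g h * χ g k) (x y : G) (n : ℕ) :
    χ x (n • y) = χ x y ^ n := by
  induction n with
  | zero => simpa using aux_bichar_zr hχ2 x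
  | succ k ih => rw [succ_nsmul, hχ2, ih, pow_succ]

/-- From `(1 - c) • x ∈ L` with `c ≠ 1` conclude `x ∈ L`. -/
lemma aux_cancel {c : F} {x : A} (hc : c ≠ 1) (h : (1 - c) • x ∈ L) : x ∈ L := by
  have hne0 : (1 - c) ≠ 0 := sub_ne_zero.mpr (Ne.symm hc)
  have := Submodule.smul_mem _ ((1 - c)⁻¹) h
  rwa [smul_smul, inv_mul_cancel₀ hne0, one_smul] at this

/-- powers of the generators lie in `L`. -/
lemma aux_pow (hχ1 : ∀ g h k : G, χ (g + h) k = χ g k * χ h k)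
    (hχ2 : ∀ g h k : G, χ g (h + k) = χ g h * χ g k)
    (hL2 : ∀ (g h : G), ∀ u ∈ 𝒜 g, ∀ v ∈ 𝒜 h, u ∈ L → v ∈ L →
      v * u - (χ h g : F) • (u * v) ∈ L)
    {g : G} {y : A} (hy : y ∈ 𝒜 g) (hyL : y ∈ L)
    (hsq : ((χ g g : F)) ^ 2 = 1 → y * y = 0) :
    ∀ n : ℕ, 1 ≤ n → y ^ n ∈ L := by
  intro n
  induction n using Nat.strong_induction_on with
  | _ n IH =>
  intro hn1
  rcases eq_or_lt_of_le hn1 with h1 | h2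
  · rw [← h1, pow_one]; exact hyL
  -- n ≥ 2
  by_cases hc : ((χ g g : F)) ^ 2 = 1
  · have hyy : y * y = 0 := hsq hc
    have : y ^ n = y ^ (n - 2) * (y * y) := by
      rw [← pow_two, ← pow_add]
      congr 1
      omega
    rw [this, hyy, mul_zero]
    exact L.zero_mem
  · -- find a split a + b = n with (χ g g)^(a*b) ≠ 1
    have key : ∀ a b : ℕ, a + b = n → 1 ≤ a → 1 ≤ b → ((χ g g : F)) ^ (a * b) ≠ 1 →
        y ^ n ∈ L := by
      intro a b hab ha hb hne
      have hA : y ^ a ∈ L := IH a (by omega) ha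
      have hB : y ^ b ∈ L := IH b (by omega) hb
      have hbr := hL2 (a • g) (b • g) (y ^ a) (SetLike.pow_mem_graded a hy)
        (y ^ b) (SetLike.pow_mem_graded b hy) hA hB
      have hcoef : (χ (b • g) (a • g) : F) = ((χ g g : F)) ^ (a * b) := by
        rw [aux_bichar_nl hχ1, aux_bichar_nr hχ2, ← pow_mul]
        push_cast
        rw [mul_comm a b]
      have hprod1 : y ^ b * y ^ a = y ^ n := by rw [← pow_add]; congr 1; omega
      have hprod2 : y ^ a * y ^ b = y ^ n := by rw [← pow_add, hab]
      rw [hprod1, hprod2, hcoef] at hbr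
      exact aux_cancel hne (by rw [sub_smul, one_smul]; exact hbr)
    by_cases hp : ((χ g g : F)) ^ (n - 1) ≠ 1
    · exact key 1 (n - 1) (by omega) le_rfl (by omega) (by rwa [one_mul])
    · push_neg at hp
      have hu : (χ g g : F) ≠ 0 := Units.ne_zero _
      have hn4 : 4 ≤ n := by
        by_contra hlt
        interval_cases n
        · simp at hp; rw [hp] at hc; simp at hc
        · rw [(by norm_num : 3 - 1 = 2)] at hp; exact hc hp
      refine key 2 (n - 2) (by omega) (by omega) (by omega) ?_
      intro hbad
      apply hc
      have h2n2 : ((χ g g : F)) ^ (2 * (n - 1)) = 1 := by rw [mul_comm, pow_mul, hp, one_pow]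
      have : (2 * (n - 2)) + 2 = 2 * (n - 1) := by omega
      have := h2n2
      rw [← ‹(2 * (n - 2)) + 2 = 2 * (n - 1)›, pow_add, hbad, one_mul] at this
      exact this

end Aux2

/-- product of prescribed powers of generators along a list -/
def Pw {A : Type*} [Monoid A] {m : ℕ} (w : Fin m → A) (l : List (Fin m × ℕ)) : A :=
  (l.map fun x => w x.1 ^ x.2).prod

/-- total degree of such a product -/
def Dw {G : Type*} [AddCommMonoid G] {m : ℕ} (d : Fin m → G) (l : List (Fin m × ℕ)) : G :=
  (l.map fun x => x.2 • d x.1).sum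

section PwLemmas
variable {A : Type*} [Monoid A] {m : ℕ} (w : Fin m → A)

@[simp] lemma Pw_nil : Pw w ([] : List (Fin m × ℕ)) = 1 := rfl

lemma Pw_append (u v : List (Fin m × ℕ)) : Pw w (u ++ v) = Pw w u * Pw w v := by
  simp [Pw]

lemma Pw_cons (x : Fin m × ℕ) (l : List (Fin m × ℕ)) :
    Pw w (x :: l) = w x.1 ^ x.2 * Pw w l := by simp [Pw]

lemma Pw_singleton (x : Fin m × ℕ) : Pw w [x] = w x.1 ^ x.2 := by simp [Pw]

lemma Pw_tot_zero (l : List (Fin m × ℕ)) (h : (l.map Prod.snd).sum = 0) :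
    Pw w l = 1 := by
  induction l with
  | nil => rfl
  | cons x l ih =>
    simp only [List.map_cons, List.sum_cons] at h
    have hx : x.2 = 0 := by omega
    have hl : (l.map Prod.snd).sum = 0 := by omega
    rw [Pw_cons, hx, pow_zero, one_mul, ih hl]

lemma Pw_all_one (l : List (Fin m × ℕ)) (h : ∀ x ∈ l, x.2 ≤ 1) :
    Pw w l = (((l.filter fun x => x.2 == 1).map Prod.fst).map w).prod := by
  induction l with
  | nil => rfl
  | cons x l ih =>
    have hx := h x List.mem_cons_self
    have ihl := ih (fun y hy => h y (List.mem_cons_of_mem x hy))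
    interval_cases hx2 : x.2
    · rw [Pw_cons, hx2, pow_zero, one_mul, ihl]
      congr 1
      rw [List.filter_cons]
      simp [hx2]
    · rw [Pw_cons, hx2, pow_one]
      rw [List.filter_cons]
      simp only [hx2]
      norm_num
      rw [ihl, List.map_map]

end PwLemmas

section DwLemmas
variable {G : Type*} [AddCommMonoid G] {m : ℕ} (d : Fin m → G)

@[simp] lemma Dw_nil : Dw d ([] : List (Fin m × ℕ)) = 0 := rfl

lemma Dw_append (u v : List (Fin m × ℕ)) : Dw d (u ++ v) = Dw d u + Dw d v := by
  simp [Dw]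

lemma Dw_singleton (x : Fin m × ℕ) : Dw d [x] = x.2 • d x.1 := by simp [Dw]

end DwLemmas

section Graded
variable {F : Type*} [Field F]
  {G : Type*} [AddCommGroup G] [DecidableEq G]
  {A : Type*} [Ring A] [Algebra F A]
  {𝒜 : G → Submodule F A} [GradedAlgebra 𝒜]

lemma Pw_mem {m : ℕ} {d : Fin m → G} {w : Fin m → A} (hhom : ∀ i, w i ∈ 𝒜 (d i))
    (l : List (Fin m × ℕ)) : Pw w l ∈ 𝒜 (Dw d l) := by
  induction l with
  | nil => exact SetLike.one_mem_graded 𝒜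
  | cons x l ih =>
    have : Dw d (x :: l) = x.2 • d x.1 + Dw d l := by simp [Dw]
    rw [this, Pw_cons]
    exact SetLike.mul_mem_graded (SetLike.pow_mem_graded x.2 (hhom x.1)) ih

end Graded

section Main
variable {F : Type*} [Field F]
  {G : Type*} [AddCommGroup G] [DecidableEq G]
  {A : Type*} [Ring A] [Algebra F A]
  {𝒜 : G → Submodule F A} [GradedAlgebra 𝒜]
  {χ : G → G → Fˣ}
  {L : Submodule F A}


lemma aux_main
    (hχ1 : ∀ g h k : G, χ (g + h) k = χ g k * χ h k)
    (hχ2 : ∀ g h k : G, χ g (h + k) = χ g h * χ g k)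
    (hL1 : L = Submodule.span F {a : A | a ∈ L ∧ ∃ g : G, a ∈ 𝒜 g})
    (hL2 : ∀ (g h : G), ∀ u ∈ 𝒜 g, ∀ v ∈ 𝒜 h, u ∈ L → v ∈ L →
      v * u - (χ h g : F) • (u * v) ∈ L)
    {m : ℕ} {d : Fin m → G} {w : Fin m → A}
    (hhom : ∀ i, w i ∈ 𝒜 (d i)) (hwL : ∀ i, w i ∈ L)
    (hsq : ∀ i, ((χ (d i) (d i) : F)) ^ 2 = 1 → w i * w i = 0)
    (hprodL : ∀ t : List (Fin m), t.Nodup →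
      (t.map w).prod ∈ L ⊔ Submodule.span F {(1:A)}) :
    ∀ (n : ℕ) (l : List (Fin m × ℕ)), (l.map Prod.fst).Nodup →
      (l.map Prod.snd).sum = n → Pw w l ∈ L ⊔ Submodule.span F {(1:A)} := by
  intro n
  induction n using Nat.strong_induction_on with
  | _ n IH =>
  intro l hnd hsum
  -- rotation principle
  have rot : ∀ u v : List (Fin m × ℕ), ((u ++ v).map Prod.fst).Nodup →
      ((u ++ v).map Prod.snd).sum = n →
      Pw w (u ++ v) ∈ L ⊔ Submodule.span F {(1:A)} →
      Pw w (v ++ u) ∈ L ⊔ Submodule.span F {(1:A)} := by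
    intro u v hnd' hsum' hmem
    by_cases hu0 : (u.map Prod.snd).sum = 0
    · rw [Pw_append, Pw_tot_zero w u hu0, one_mul] at hmem
      rw [Pw_append, Pw_tot_zero w u hu0, mul_one]
      exact hmem
    by_cases hv0 : (v.map Prod.snd).sum = 0
    · rw [Pw_append, Pw_tot_zero w v hv0, mul_one] at hmem
      rw [Pw_append, Pw_tot_zero w v hv0, one_mul]
      exact hmem
    rw [List.map_append, List.sum_append] at hsum'
    rw [List.map_append] at hnd'
    have hndu : (u.map Prod.fst).Nodup := hnd'.of_append_left
    have hndv : (v.map Prod.fst).Nodup := hnd'.of_append_right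
    have hUS := IH ((u.map Prod.snd).sum) (by omega) u hndu rfl
    have hVS := IH ((v.map Prod.snd).sum) (by omega) v hndv rfl
    obtain ⟨U, α, hUL, hUmem, hUeq⟩ := aux_decomp hL1 hUS (Pw_mem hhom u)
    obtain ⟨V, β, hVL, hVmem, hVeq⟩ := aux_decomp hL1 hVS (Pw_mem hhom v)
    have hexp : ∀ (X Y : A) (γ δ : F), (X + γ • (1:A)) * (Y + δ • (1:A))
        = X * Y + (δ • X + γ • Y + (γ * δ) • (1:A)) := by
      intro X Y γ δ
      simp only [mul_add, add_mul, smul_mul_assoc, mul_smul_comm, one_mul, mul_one, smul_smul]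
      module
    have hrest1 : β • U + α • V + (α * β) • (1:A) ∈ L ⊔ Submodule.span F {(1:A)} := by
      refine Submodule.add_mem _ (Submodule.add_mem _ ?_ ?_) ?_
      · exact Submodule.smul_mem _ _ (Submodule.mem_sup_left hUL)
      · exact Submodule.smul_mem _ _ (Submodule.mem_sup_left hVL)
      · exact Submodule.smul_mem _ _
          (Submodule.mem_sup_right (Submodule.mem_span_singleton_self 1))
    have hrest2 : α • V + β • U + (β * α) • (1:A) ∈ L ⊔ Submodule.span F {(1:A)} := by
      refine Submodule.add_mem _ (Submodule.add_mem _ ?_ ?_) ?_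
      · exact Submodule.smul_mem _ _ (Submodule.mem_sup_left hVL)
      · exact Submodule.smul_mem _ _ (Submodule.mem_sup_left hUL)
      · exact Submodule.smul_mem _ _
          (Submodule.mem_sup_right (Submodule.mem_span_singleton_self 1))
    rw [Pw_append, hUeq, hVeq, hexp U V α β] at hmem
    have hUV : U * V ∈ L ⊔ Submodule.span F {(1:A)} := by
      have := Submodule.sub_mem _ hmem hrest1
      simpa using this
    have hVU := aux_swap hL2 hUmem hVmem hUL hVL hUV
    rw [Pw_append, hUeq, hVeq, hexp V U β α]
    exact Submodule.add_mem _ hVU hrest2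
  by_cases hall : ∀ x ∈ l, x.2 ≤ 1
  · -- base case : product of distinct generators
    rw [Pw_all_one w l hall, List.map_map]
    have hsub : List.Sublist ((l.filter fun x => x.2 == 1).map Prod.fst) (l.map Prod.fst) :=
      (List.filter_sublist).map Prod.fst
    have hndf : ((l.filter fun x => x.2 == 1).map Prod.fst).Nodup := hnd.sublist hsub
    have := hprodL _ hndf
    rwa [List.map_map] at this
  · push_neg at hall
    obtain ⟨x, hxl, hx2⟩ := hall
    have he2 : 2 ≤ x.2 := by omega
    obtain ⟨l₁, l₂, rfl⟩ := List.append_of_mem hxl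
    set r : List (Fin m × ℕ) := l₂ ++ l₁ with hr
    -- permutations
    have hpA : List.Perm (l₁ ++ x :: l₂) ((x :: l₂) ++ l₁) := List.perm_append_comm
    have hpB : List.Perm (l₁ ++ x :: l₂) (r ++ [x]) := by
      have h1 : List.Perm (l₁ ++ x :: l₂) (x :: (l₁ ++ l₂)) := List.perm_middle
      have h2 : List.Perm (x :: (l₁ ++ l₂)) (x :: (l₂ ++ l₁)) :=
        List.Perm.cons x List.perm_append_comm
      have h3 : List.Perm (x :: r) (r ++ [x]) := (List.perm_append_singleton x r).symm
      exact (h1.trans h2).trans h3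
    have hndA : (((x :: l₂) ++ l₁).map Prod.fst).Nodup :=
      ((hpA.map Prod.fst).nodup_iff).mp hnd
    have hsumA : (((x :: l₂) ++ l₁).map Prod.snd).sum = n := by
      rw [← (hpA.map Prod.snd).sum_eq]; exact hsum
    have hndB : ((r ++ [x]).map Prod.fst).Nodup :=
      ((hpB.map Prod.fst).nodup_iff).mp hnd
    have hsumB : ((r ++ [x]).map Prod.snd).sum = n := by
      rw [← (hpB.map Prod.snd).sum_eq]; exact hsum
    apply rot (x :: l₂) l₁ hndA hsumA
    have hform : (x :: l₂) ++ l₁ = [x] ++ r := by simp [hr]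
    rw [hform]
    apply rot r [x] hndB hsumB
    -- MAIN STEP : Pw w (r ++ [x]) ∈ S
    set i := x.1 with hi
    set e := x.2 with he
    set g := d i with hg
    set y := w i with hy
    have hyA : y ∈ 𝒜 g := hhom i
    have hyL : y ∈ L := hwL i
    have hsr : (r.map Prod.snd).sum + e = n := by
      rw [← hsumB]; simp; rfl
    rw [Pw_append, Pw_singleton]
    show Pw w r * y ^ e ∈ L ⊔ Submodule.span F {(1:A)}
    by_cases hc : ((χ g g : F)) ^ 2 = 1
    · have hyy : y * y = 0 := hsq i hc
      have hpe : y ^ e = y ^ (e - 2) * (y * y) := by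
        rw [← pow_two, ← pow_add]
        congr 1
        omega
      rw [hpe, hyy, mul_zero, mul_zero]
      exact Submodule.zero_mem _
    · set h : G := Dw d r + (e - 2) • g with hh
      set v : A := Pw w r * y ^ (e - 2) with hv
      have hndsame : ∀ e' : ℕ, ((r ++ [(i, e')]).map Prod.fst) = ((r ++ [x]).map Prod.fst) := by
        intro e'; simp [hi]
      have hveq : Pw w (r ++ [(i, e - 2)]) = v := by rw [Pw_append, Pw_singleton]
      have hvS : v ∈ L ⊔ Submodule.span F {(1:A)} := by
        rw [← hveq]
        refine IH ((r.map Prod.snd).sum + (e - 2)) (by omega) _ ?_ (by simp)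
        rw [hndsame]; exact hndB
      have hvmem : v ∈ 𝒜 h := by
        have hDw : Dw d (r ++ [(i, e - 2)]) = h := by rw [Dw_append, Dw_singleton, hh]
        rw [← hveq, ← hDw]
        exact Pw_mem hhom _
      by_cases hβ : ((χ g (h + g) : F)) * ((χ (h + g) g : F)) = 1
      · -- HARD case
        have hsplit1 : (χ g (h + g)) = χ g h * χ g g := hχ2 g h g
        have hsplit2 : (χ (h + g) g) = χ h g * χ g g := hχ1 h g g
        have hsplit2' : (χ (g + h) g) = χ g g * χ h g := hχ1 g h g
        set q : F := (χ g h : F) * (χ h g : F) with hq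
        have hkey : q * ((χ g g : F)) ^ 2 = 1 := by
          rw [hsplit1, hsplit2] at hβ
          push_cast at hβ
          rw [hq]
          linear_combination hβ
        have hqne : q ≠ 1 := by
          intro h1
          rw [h1, one_mul] at hkey
          exact hc hkey
        have hne0 : h ≠ 0 := by
          intro h0
          apply hqne
          rw [hq, h0, aux_bichar_zr hχ2, aux_bichar_zl hχ1]
          norm_num
        have hvL : v ∈ L := aux_hom_ne hL1 hne0 hvS hvmem
        have hV1L : v * y ∈ L := by
          refine aux_merge hL2 hvmem hyA hvL hyL ?_
          rw [mul_comm]; rw [hq] at hqne; exact hqne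
        have hV1'L : y * v ∈ L := by
          refine aux_merge hL2 hyA hvmem hyL hvL ?_
          rw [hq] at hqne; exact hqne
        have hy2L : y ^ 2 ∈ L := aux_pow hχ1 hχ2 hL2 hyA hyL (hsq i) 2 one_le_two
        have hy2mem : y ^ 2 ∈ 𝒜 (2 • g) := SetLike.pow_mem_graded 2 hyA
        have b2 := hL2 (h + g) g (v * y) (SetLike.mul_mem_graded hvmem hyA) y hyA hV1L hyL
        have b3 := hL2 g (g + h) y hyA (y * v) (SetLike.mul_mem_graded hyA hvmem) hyL hV1'L
        have b5 := hL2 (2 • g) h (y ^ 2) hy2mem v hvmem hy2L hvL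
        have e1 : (v * y) * y = v * y ^ 2 := by rw [mul_assoc, ← pow_two]
        have e2 : (y * v) * y = y * (v * y) := by rw [mul_assoc]
        have e3 : y ^ 2 * v = y * (y * v) := by rw [pow_two, mul_assoc]
        rw [e1] at b2
        rw [e2] at b3
        rw [e3] at b5
        set A' := ((χ g (h + g) : F)) with hA'
        set B' := ((χ (g + h) g : F)) with hB'
        set C' := ((χ h (2 • g) : F)) with hC'
        have hB0 : B' ≠ 0 := Units.ne_zero _
        have t1 : A' • (v * y ^ 2) - B' • (y * (y * v)) ∈ L := by
          have := Submodule.sub_mem _ b3 b2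
          convert this using 1
          module
        have t3 : (1 - C' * B'⁻¹ * A') • (v * y ^ 2) ∈ L := by
          have := Submodule.sub_mem _ b5 (Submodule.smul_mem _ (C' * B'⁻¹) t1)
          convert this using 1
          have hCB : C' * B'⁻¹ * B' = C' := by field_simp
          rw [smul_sub, smul_smul, smul_smul, hCB, sub_smul, one_smul]
          abel
        have hcoefq : C' * B'⁻¹ * A' = q := by
          have hC2 : (χ h (2 • g)) = (χ h g) ^ 2 := aux_bichar_nr hχ2 h g 2
          rw [hA', hB', hC', hsplit1, hsplit2', hC2, hq]
          push_cast
          have hgg0 : ((χ g g : F)) ≠ 0 := Units.ne_zero _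
          have hhg0 : ((χ h g : F)) ≠ 0 := Units.ne_zero _
          field_simp
        rw [hcoefq] at t3
        have hm2 : v * y ^ 2 ∈ L := aux_cancel hqne t3
        have hfin : Pw w r * y ^ e = v * y ^ 2 := by
          rw [hv, mul_assoc, ← pow_add]
          congr 2
          omega
        rw [hfin]
        exact Submodule.mem_sup_left hm2
      · -- merge case
        have hv1eq : Pw w (r ++ [(i, e - 1)]) = Pw w r * y ^ (e - 1) := by
          rw [Pw_append, Pw_singleton]
        have hv1S : Pw w r * y ^ (e - 1) ∈ L ⊔ Submodule.span F {(1:A)} := by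
          rw [← hv1eq]
          refine IH ((r.map Prod.snd).sum + (e - 1)) (by omega) _ ?_ (by simp)
          rw [hndsame]; exact hndB
        have hdeq : Dw d (r ++ [(i, e - 1)]) = h + g := by
          rw [Dw_append, Dw_singleton, hh, add_assoc]
          congr 1
          rw [show e - 1 = (e - 2) + 1 by omega, succ_nsmul]
        have hv1mem : Pw w r * y ^ (e - 1) ∈ 𝒜 (h + g) := by
          rw [← hv1eq, ← hdeq]
          exact Pw_mem hhom _
        have hk0 : h + g ≠ 0 := by
          intro h0
          apply hβ
          rw [h0, aux_bichar_zr hχ2, aux_bichar_zl hχ1]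
          norm_num
        have hv1L : Pw w r * y ^ (e - 1) ∈ L := aux_hom_ne hL1 hk0 hv1S hv1mem
        have hWL : (Pw w r * y ^ (e - 1)) * y ∈ L := by
          refine aux_merge hL2 hv1mem hyA hv1L hyL ?_
          rw [mul_comm]
          exact hβ
        have hfin : Pw w r * y ^ e = (Pw w r * y ^ (e - 1)) * y := by
          rw [mul_assoc, ← pow_succ]
          congr 2
          omega
        rw [hfin]
        exact Submodule.mem_sup_left hWL

end Main

/-- An `F`-subspace `L` of a `G`-graded algebra `A` is *bracket-closed* (w.r.t. the
bicharacter `χ`) if it is spanned by its homogeneous elements and is closed under the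
braided bracket `[u,v] = vu − p_{vu}·uv` of homogeneous elements, where
`p_{uv} = χ (deg u) (deg v)`. -/
def IsBracketClosed {F A : Type*} (G : Type*) [Field F] [AddCommGroup G]
    [Ring A] [Algebra F A]
    (𝒜 : G → Submodule F A) (χ : G → G → Fˣ) (L : Submodule F A) : Prop :=
  L = Submodule.span F {a : A | a ∈ L ∧ ∃ g : G, a ∈ 𝒜 g} ∧
    ∀ (g h : G), ∀ u ∈ 𝒜 g, ∀ v ∈ 𝒜 h,
      u ∈ L → v ∈ L → v * u - (χ h g : F) • (u * v) ∈ L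

theorem stmt_11 (F : Type*) [Field F] [CharZero F]
    (G : Type*) [AddCommGroup G] [DecidableEq G]
    (A : Type*) [Ring A] [Algebra F A]
    (𝒜 : G → Submodule F A) [GradedAlgebra 𝒜]
    (χ : G → G → Fˣ)
    (hχ1 : ∀ g h k : G, χ (g + h) k = χ g k * χ h k)
    (hχ2 : ∀ g h k : G, χ g (h + k) = χ g h * χ g k)
    (L : Submodule F A) (hL : IsBracketClosed G 𝒜 χ L)
    (m : ℕ) (hm : 0 < m)
    (d : Fin m → G) (w : Fin m → A)
    (hhom : ∀ i, w i ∈ 𝒜 (d i)) (hwL : ∀ i, w i ∈ L)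
    (hsq : ∀ i, ((χ (d i) (d i) : F)) ^ 2 = 1 → w i * w i = 0)
    (hprod : ∀ (r : ℕ) (f : Fin r → Fin m), Function.Injective f →
      (List.ofFn fun j => w (f j)).prod ∈ L ⊔ Submodule.span F {(1 : A)})
    (a : Fin m → ℕ) :
    (List.ofFn fun i => w i ^ a i).prod ∈ L ⊔ Submodule.span F {(1 : A)} := by
  obtain ⟨hL1, hL2⟩ := hL
  have hprodL : ∀ t : List (Fin m), t.Nodup →
      (t.map w).prod ∈ L ⊔ Submodule.span F {(1:A)} := by
    intro t ht
    have hinj : Function.Injective t.get := List.nodup_iff_injective_get.mp ht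
    have hmem := hprod t.length t.get hinj
    have heq : (List.ofFn fun j => w (t.get j)) = t.map w := by
      conv_rhs => rw [← List.ofFn_get t]
      rw [List.map_ofFn]
      rfl
    rwa [heq] at hmem
  have hmain := aux_main hχ1 hχ2 hL1 hL2 hhom hwL hsq hprodL
  have heq : Pw w (List.ofFn fun i : Fin m => (i, a i)) =
      (List.ofFn fun i => w i ^ a i).prod := by
    rw [Pw, List.map_ofFn]
    rfl
  rw [← heq]
  refine hmain _ _ ?_ rfl
  rw [List.map_ofFn]
  exact List.nodup_ofFn.mpr (fun i j hij => by simpa using hij)
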